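/- In the universal construction, the linearization obtained by ordering operations according to their associated consensus objects (trivial operations placed after the regular one of the same consensus, preserving order among trivial ones) extends the real-time precedence order of the original history. -/
import Mathlib


/-- The linearization of the universal construction (ordering operations by
their associated consensus in the racing order r, with trivial operations
after the regular one of the same consensus, and trivial operations of the
same consensus kept in real-time order) extends the real-time precedence
order: resp op < inv op' implies op precedes op' in the linearization. -/
theorem stmt9 {Op C : Type} (assoc : Op → C) (r : C → C → Prop)
    (regular : Op → Prop) (inv resp witness : Op → ℕ)
    (decidedAt : C → ℕ → Prop)
    -- r is a (strict) total order on the consensus objects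
    (htri : ∀ c c', c = c' ∨ r c c' ∨ r c' c)
    -- (a) each operation witnesses, within its interval, a time at which its
    -- associated consensus is undecided
    (hint : ∀ op, inv op ≤ witness op ∧ witness op ≤ resp op)
    (hwit : ∀ op, ¬ decidedAt (assoc op) (witness op))
    -- decisions are stable
    (hmono : ∀ c t t', decidedAt c t → t ≤ t' → decidedAt c t')
    -- (b) racing proposition: when an operation runs on its consensus, all
    -- r-smaller consensus objects are decided
    (hsmaller : ∀ op c, r c (assoc op) → decidedAt c (witness op))
    -- at most one regular operation per consensus
    (huniq : ∀ op op', regular op → regular op' → assoc op = assoc op' → op = op')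
    -- (c) a trivial operation cannot real-time-precede the regular operation
    -- of the same consensus
    (hc : ∀ op op', assoc op = assoc op' → ¬ regular op → regular op' →
      ¬ resp op < inv op') :
    ∀ op op', resp op < inv op' →
      (r (assoc op) (assoc op') ∨
       (assoc op = assoc op' ∧
         ((regular op ∧ ¬ regular op') ∨
          (¬ regular op ∧ ¬ regular op' ∧ resp op < inv op')))) := by
  intro op op' h
  rcases htri (assoc op) (assoc op') with heq | hr | hr
  · right
    refine ⟨heq, ?_⟩
    by_cases hro : regular op
    · left
      refine ⟨hro, fun hro' => ?_⟩
      have := huniq op op' hro hro' heq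
      subst this
      have h1 := hint op
      omega
    · by_cases hro' : regular op'
      · exact absurd h (hc op op' heq hro hro')
      · exact Or.inr ⟨hro, hro', h⟩
  · exact Or.inl hr
  · exfalso
    have hd := hsmaller op (assoc op') hr
    have h1 := hint op
    have h2 := hint op'
    exact hwit op' (hmono _ _ _ hd (by omega))
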